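/- arXiv:1408.4086 — 2 statements merged into one kernel-verified Lean document; each statement's English description precedes it below -/
import Mathlib

section
/- Let d ≥ 1, k > (2d+1)n, and u ∈ A^(F_k) a pattern on the cube F_k = [1,k]^d over a finite alphabet A with exactly j distinct n-cube subpatterns. If J is an n-repeat cover for u, then k^d − |A(J)| ≤ j·(1 + 4dn/k). -/
/-- Pointwise addition of points in `ℤ^d`. -/
def ptAdd {d : ℕ} (v t : Fin d → ℤ) : Fin d → ℤ := fun i => v i + t i

/-- `inCube n t` means `t` lies in the cube `[0, n)^d` of offsets. -/
def inCube {d : ℕ} (n : ℕ) (t : Fin d → ℤ) : Prop := ∀ i, 0 ≤ t i ∧ t i < n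

/-- The `n`-cube (translate of `F_n`) with corner `v`. -/
def cubeSet {d : ℕ} (n : ℕ) (v : Fin d → ℤ) : Set (Fin d → ℤ) :=
  {x | ∀ i, v i ≤ x i ∧ x i < v i + n}

/-- The `n`-cube with corner `v` is contained in `E`. -/
def cubeIn {d : ℕ} (n : ℕ) (E : Set (Fin d → ℤ)) (v : Fin d → ℤ) : Prop :=
  cubeSet n v ⊆ E

/-- The `n`-cube subpatterns of `u` at corners `v₁` and `v₂` coincide (up to translation). -/
def samePat {A : Type*} {d : ℕ} (n : ℕ) (u : (Fin d → ℤ) → A) (v₁ v₂ : Fin d → ℤ) : Prop :=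
  ∀ t : Fin d → ℤ, inCube n t → u (ptAdd v₁ t) = u (ptAdd v₂ t)

/-- Lexicographic (strict) order on `ℤ^d`. -/
def lexLt {d : ℕ} (p q : Fin d → ℤ) : Prop :=
  ∃ i : Fin d, (∀ j < i, p j = q j) ∧ p i < q i

/-- Lexicographic order on `ℤ^d`. -/
def lexLe {d : ℕ} (p q : Fin d → ℤ) : Prop := lexLt p q ∨ p = q

/-- `(v₁, v₂)` (identified with the pair of `n`-cubes at these corners) is an `n`-repeat in
the pattern `u` on `E`: both cubes lie in `E`, they are distinct, they carry the same
subpattern of `u`, and `v₁` is the lexicographically minimal occurrence of that subpattern. -/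
def IsRepeat {A : Type*} {d : ℕ} (n : ℕ) (E : Set (Fin d → ℤ)) (u : (Fin d → ℤ) → A)
    (v₁ v₂ : Fin d → ℤ) : Prop :=
  cubeIn n E v₁ ∧ cubeIn n E v₂ ∧ v₁ ≠ v₂ ∧ samePat n u v₁ v₂ ∧
    ∀ v, cubeIn n E v → samePat n u v v₁ → lexLe v₁ v

/-- `A(J)`: the union of the second cubes of the pairs in `J`. -/
def repArea {d : ℕ} (n : ℕ) (J : Set ((Fin d → ℤ) × (Fin d → ℤ))) : Set (Fin d → ℤ) :=
  ⋃ p ∈ J, cubeSet n p.2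

/-- `J` is an `n`-repeat cover for `u` on `E`: each pair in `J` is an `n`-repeat in `u`,
and the second cube of every `n`-repeat in `u` is contained in `A(J)`. -/
def IsRepeatCover {A : Type*} {d : ℕ} (n : ℕ) (E : Set (Fin d → ℤ)) (u : (Fin d → ℤ) → A)
    (J : Set ((Fin d → ℤ) × (Fin d → ℤ))) : Prop :=
  (∀ p ∈ J, IsRepeat n E u p.1 p.2) ∧
  (∀ v₁ v₂, IsRepeat n E u v₁ v₂ → cubeSet n v₂ ⊆ repArea n J)

/-- The cube `F_k = [1,k]^d` in `ℤ^d`. -/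
def Fcube (d k : ℕ) : Set (Fin d → ℤ) := {x | ∀ i, 1 ≤ x i ∧ x i ≤ (k : ℤ)}

/-- The set of distinct `n`-cube subpatterns of `u` occurring at `n`-cubes contained in `E`. -/
def WnOf {A : Type*} {d : ℕ} (n : ℕ) (E : Set (Fin d → ℤ)) (u : (Fin d → ℤ) → A) :
    Set ((Fin d → Fin n) → A) :=
  {w | ∃ v : Fin d → ℤ, cubeIn n E v ∧ ∀ t : Fin d → Fin n, w t = u (fun i => v i + (t i : ℤ))}

set_option maxHeartbeats 1000000


open Finset

lemma lexLt_iff' {d : ℕ} (p q : Fin d → ℤ) : lexLt p q ↔ toLex p < toLex q := Iff.rfl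

lemma lexLe_iff' {d : ℕ} (p q : Fin d → ℤ) : lexLe p q ↔ toLex p ≤ toLex q := by
  rw [le_iff_lt_or_eq, lexLe]
  constructor
  · rintro (h | rfl)
    · exact Or.inl h
    · exact Or.inr rfl
  · rintro (h | h)
    · exact Or.inl h
    · exact Or.inr (by simpa using h)

lemma lexLe_antisymm' {d : ℕ} {p q : Fin d → ℤ} (h1 : lexLe p q) (h2 : lexLe q p) : p = q := by
  rw [lexLe_iff'] at h1 h2
  simpa using le_antisymm h1 h2

/-- Partition of `(0, X*a]` into `X` blocks of length `a`. -/
lemma blockSum (a X : ℤ) (ha : 0 < a) (S : Finset ℤ) :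
    ∑ x ∈ Icc 1 X, ((Ioc ((x-1)*a) (x*a)) ∩ S).card = ((Ioc 0 (X*a)) ∩ S).card := by
  classical
  have key : ∀ y ∈ (Ioc (0:ℤ) (X*a)) ∩ S, (y-1)/a + 1 ∈ Icc 1 X := by
    intro y hy
    rw [mem_inter, mem_Ioc] at hy
    obtain ⟨⟨h0, hXa⟩, _⟩ := hy
    have h1 : 0 ≤ (y-1)/a := Int.ediv_nonneg (by omega) ha.le
    have h2 : (y-1)/a < X := by rw [Int.ediv_lt_iff_lt_mul ha]; linarith
    rw [mem_Icc]; omega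
  rw [Finset.card_eq_sum_card_fiberwise key]
  refine Finset.sum_congr rfl fun x hx => ?_
  rw [mem_Icc] at hx
  congr 1
  symm
  apply Finset.ext
  intro y
  simp only [mem_filter, mem_inter, mem_Ioc]
  constructor
  · rintro ⟨⟨⟨h0, hXa⟩, hS⟩, hf⟩
    have hl : (x-1)*a ≤ y - 1 := (Int.le_ediv_iff_mul_le ha).mp (by linarith)
    have hr : y - 1 < x*a := (Int.ediv_lt_iff_lt_mul ha).mp (by linarith)
    exact ⟨⟨by linarith, by linarith⟩, hS⟩
  · rintro ⟨⟨hl, hr⟩, hS⟩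
    have hx0 : (0:ℤ) ≤ (x-1)*a := mul_nonneg (by omega) ha.le
    have hXa : x*a ≤ X*a := mul_le_mul_of_nonneg_right (by omega) ha.le
    have hfl : x - 1 ≤ (y-1)/a := (Int.le_ediv_iff_mul_le ha).mpr (by linarith)
    have hfr : (y-1)/a < x := (Int.ediv_lt_iff_lt_mul ha).mpr (by linarith)
    have hfr' : (y-1)/a + 1 ≤ x := Int.lt_iff_add_one_le.mp hfr
    exact ⟨⟨⟨by linarith, by linarith⟩, hS⟩, by linarith⟩

lemma rowSum (a b X Y x : ℤ) (ha : 0 < a) (hb : 0 < b) (hXY : X*a = Y*b)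
    (hx1 : 1 ≤ x) (hx2 : x ≤ X) :
    ∑ v ∈ Icc 1 Y, ((Ioc ((x-1)*a) (x*a)) ∩ (Ioc ((v-1)*b) (v*b))).card = a.toNat := by
  calc ∑ v ∈ Icc 1 Y, ((Ioc ((x-1)*a) (x*a)) ∩ (Ioc ((v-1)*b) (v*b))).card
      = ∑ v ∈ Icc 1 Y, ((Ioc ((v-1)*b) (v*b)) ∩ (Ioc ((x-1)*a) (x*a))).card := by
        exact Finset.sum_congr rfl fun v _ => by rw [Finset.inter_comm]
    _ = ((Ioc 0 (Y*b)) ∩ (Ioc ((x-1)*a) (x*a))).card := blockSum b Y hb _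
    _ = (Ioc ((x-1)*a) (x*a)).card := by
        congr 1
        apply Finset.inter_eq_right.mpr
        intro y hy
        rw [mem_Ioc] at hy ⊢
        have hx0 : (0:ℤ) ≤ (x-1)*a := mul_nonneg (by omega) ha.le
        have hXa : x*a ≤ X*a := mul_le_mul_of_nonneg_right hx2 ha.le
        exact ⟨by linarith, by linarith [hXY]⟩
    _ = a.toNat := by rw [Int.card_Ioc]; congr 1; ring

lemma bern (d : ℕ) (t : ℝ) (ht : 0 ≤ t) (hdt : (d:ℝ) * t ≤ 1/2) : (1+t)^d ≤ 1 + 2*d*t := by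
  induction d with
  | zero => simp
  | succ e ih =>
    push_cast
    push_cast at hdt
    have he : (e:ℝ) * t ≤ 1/2 := by nlinarith
    have h2 := ih he
    have h1t : (0:ℝ) ≤ 1 + t := by linarith
    have het : 2*(e:ℝ)*t ≤ 1 := by nlinarith
    calc (1+t)^(e+1) = (1+t)^e * (1+t) := by ring
      _ ≤ (1 + 2*e*t) * (1+t) := mul_le_mul_of_nonneg_right h2 h1t
      _ ≤ 1 + 2*((e:ℝ)+1)*t := by nlinarith

lemma lexLe_trans' {d : ℕ} {p q r : Fin d → ℤ} (h1 : lexLe p q) (h2 : lexLe q r) : lexLe p r := by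
  rw [lexLe_iff'] at h1 h2 ⊢
  exact le_trans h1 h2

lemma lexLe_total' {d : ℕ} (p q : Fin d → ℤ) : lexLe p q ∨ lexLe q p := by
  classical
  by_cases hpq : p = q
  · exact Or.inl (Or.inr hpq)
  · have hD : (Finset.univ.filter (fun i => p i ≠ q i)).Nonempty := by
      rw [Finset.filter_nonempty_iff]
      by_contra h
      push_neg at h
      exact hpq (funext fun i => h i (Finset.mem_univ i))
    set D := Finset.univ.filter (fun i => p i ≠ q i) with hDdef
    have hi₀ := D.min'_mem hD
    set i₀ := D.min' hD with hi₀def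
    have hlt : ∀ j < i₀, p j = q j := by
      intro j hj
      by_contra hne
      have hjD : j ∈ D := by simp [hDdef, hne]
      have := D.min'_le j hjD
      exact absurd (lt_of_le_of_lt this hj) (lt_irrefl _)
    have hne : p i₀ ≠ q i₀ := by simpa [hDdef] using hi₀
    rcases lt_or_gt_of_ne hne with h | h
    · exact Or.inl (Or.inl ⟨i₀, hlt, h⟩)
    · exact Or.inr (Or.inl ⟨i₀, fun j hj => (hlt j hj).symm, h⟩)

lemma exists_lex_min {d : ℕ} (s : Finset (Fin d → ℤ)) (hs : s.Nonempty) :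
    ∃ m ∈ s, ∀ w ∈ s, lexLe m w := by
  classical
  induction s using Finset.induction_on with
  | empty => exact absurd hs (by simp)
  | insert a s' ha ih =>
    rcases s'.eq_empty_or_nonempty with rfl | hne
    · refine ⟨a, Finset.mem_insert_self a ∅, ?_⟩
      intro w hw
      rcases Finset.mem_insert.mp hw with rfl | hw'
      · exact Or.inr rfl
      · exact absurd hw' (Finset.notMem_empty w)
    · obtain ⟨m, hm, hmin⟩ := ih hne
      rcases lexLe_total' a m with h | h
      · refine ⟨a, Finset.mem_insert_self a s', ?_⟩
        intro w hw
        rcases Finset.mem_insert.mp hw with rfl | hw'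
        · exact Or.inr rfl
        · exact lexLe_trans' h (hmin w hw')
      · refine ⟨m, Finset.mem_insert_of_mem hm, ?_⟩
        intro w hw
        rcases Finset.mem_insert.mp hw with rfl | hw'
        · exact h
        · exact hmin w hw'

noncomputable def boxF' (d k : ℕ) : Finset (Fin d → ℤ) := Fintype.piFinset fun _ => Finset.Icc 1 (k:ℤ)
noncomputable def boxG' (d n k : ℕ) : Finset (Fin d → ℤ) :=
  Fintype.piFinset fun _ => Finset.Icc 1 ((k:ℤ) - n + 1)

lemma countLemma (d n k : ℕ) (hn : 1 ≤ n) (hnk : n < k)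
    (Mf Pf : Finset (Fin d → ℤ)) (hM : Mf ⊆ boxG' d n k) (hP : Pf ⊆ boxF' d k)
    (hcov : ∀ x ∈ Pf, ∀ v ∈ boxG' d n k, (∀ i, v i ≤ x i ∧ x i < v i + n) → v ∈ Mf) :
    Pf.card * ((k:ℤ) - n + 1).toNat ^ d ≤ Mf.card * k ^ d := by
  classical
  set mZ : ℤ := (k:ℤ) - n + 1 with hmZ
  have hn1 : (1:ℤ) ≤ (n:ℤ) := by exact_mod_cast hn
  have hkn : (n:ℤ) < (k:ℤ) := by exact_mod_cast hnk
  have hmpos : 0 < mZ := by omega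
  have hkpos : (0:ℤ) < (k:ℤ) := by omega
  set q1 : ℤ → ℤ → ℕ := fun x w =>
    ((Finset.Ioc ((x-1)*mZ) (x*mZ)) ∩ (Finset.Ioc ((w-1)*(k:ℤ)) (w*(k:ℤ)))).card with hq1
  have hsupp : ∀ x v : ℤ, 1 ≤ x → x ≤ (k:ℤ) → q1 x v ≠ 0 → v ≤ x ∧ x - n + 1 ≤ v := by
    intro x v hx1 hx2 hne
    obtain ⟨y, hy⟩ := Finset.card_ne_zero.mp hne
    rw [Finset.mem_inter, Finset.mem_Ioc, Finset.mem_Ioc] at hy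
    obtain ⟨⟨h1, h2⟩, h3, h4⟩ := hy
    constructor
    · have e2 : x*mZ ≤ x*(k:ℤ) := mul_le_mul_of_nonneg_left (by omega) (by omega)
      have e3 : (v-1)*(k:ℤ) < x*(k:ℤ) := by linarith
      have := lt_of_mul_lt_mul_right e3 hkpos.le
      omega
    · have e3 : (x - n)*(k:ℤ) ≤ (x-1)*mZ := by
        nlinarith [mul_nonneg (show (0:ℤ) ≤ (n:ℤ)-1 by omega)
          (show (0:ℤ) ≤ (k:ℤ)-x+1 by omega)]
      have e4 : (x - n)*(k:ℤ) < v*(k:ℤ) := by linarith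
      have := lt_of_mul_lt_mul_right e4 hkpos.le
      omega
  have hrow : ∀ x : Fin d → ℤ, x ∈ boxF' d k →
      ∑ v ∈ boxG' d n k, ∏ i, q1 (x i) (v i) = mZ.toNat ^ d := by
    intro x hx
    rw [boxG', ← Finset.prod_univ_sum]
    have h1 : ∀ i : Fin d, ∑ w ∈ Finset.Icc 1 mZ, q1 (x i) w = mZ.toNat := by
      intro i
      have hxi := (Fintype.mem_piFinset.mp hx) i
      rw [Finset.mem_Icc] at hxi
      exact rowSum mZ (k:ℤ) (k:ℤ) mZ (x i) hmpos hkpos (mul_comm _ _) hxi.1 hxi.2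
    rw [Finset.prod_congr rfl (fun i _ => h1 i), Finset.prod_const, Finset.card_univ,
      Fintype.card_fin]
  have hcol : ∀ v : Fin d → ℤ, v ∈ boxG' d n k →
      ∑ x ∈ boxF' d k, ∏ i, q1 (x i) (v i) = k ^ d := by
    intro v hv
    have hps := Finset.prod_univ_sum (fun _ : Fin d => Finset.Icc 1 (k:ℤ))
      (fun i w => q1 w (v i))
    rw [boxF', ← hps]
    have h1 : ∀ i : Fin d, ∑ w ∈ Finset.Icc 1 (k:ℤ), q1 w (v i) = k := by
      intro i
      have hvi := (Fintype.mem_piFinset.mp hv) i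
      rw [Finset.mem_Icc] at hvi
      have h := rowSum (k:ℤ) mZ mZ (k:ℤ) (v i) hkpos hmpos (mul_comm _ _) hvi.1 hvi.2
      calc ∑ w ∈ Finset.Icc 1 (k:ℤ), q1 w (v i)
          = ∑ w ∈ Finset.Icc 1 (k:ℤ),
              ((Finset.Ioc ((v i - 1)*(k:ℤ)) ((v i)*(k:ℤ))) ∩
                (Finset.Ioc ((w-1)*mZ) (w*mZ))).card :=
            Finset.sum_congr rfl fun w _ => by rw [hq1]; rw [Finset.inter_comm]
        _ = (k:ℤ).toNat := h
        _ = k := Int.toNat_natCast k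
    rw [Finset.prod_congr rfl (fun i _ => h1 i), Finset.prod_const, Finset.card_univ,
      Fintype.card_fin]
  calc Pf.card * mZ.toNat ^ d
      = ∑ _x ∈ Pf, mZ.toNat ^ d := by rw [Finset.sum_const, smul_eq_mul]
    _ = ∑ x ∈ Pf, ∑ v ∈ boxG' d n k, ∏ i, q1 (x i) (v i) :=
        Finset.sum_congr rfl fun x hx => (hrow x (hP hx)).symm
    _ = ∑ x ∈ Pf, ∑ v ∈ Mf, ∏ i, q1 (x i) (v i) := by
        refine Finset.sum_congr rfl fun x hx => (Finset.sum_subset hM ?_).symm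
        intro v hvG hvM
        by_contra hQ
        refine hvM (hcov x hx v hvG fun i => ?_)
        have hxi := (Fintype.mem_piFinset.mp (hP hx)) i
        rw [Finset.mem_Icc] at hxi
        have hne : q1 (x i) (v i) ≠ 0 := by
          intro h0
          exact hQ (Finset.prod_eq_zero (Finset.mem_univ i) h0)
        have := hsupp (x i) (v i) hxi.1 hxi.2 hne
        omega
    _ = ∑ v ∈ Mf, ∑ x ∈ Pf, ∏ i, q1 (x i) (v i) := Finset.sum_comm
    _ ≤ ∑ v ∈ Mf, ∑ x ∈ boxF' d k, ∏ i, q1 (x i) (v i) :=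
        Finset.sum_le_sum fun v _ => Finset.sum_le_sum_of_subset hP
    _ = ∑ _v ∈ Mf, k ^ d := Finset.sum_congr rfl fun v hv => hcol v (hM hv)
    _ = Mf.card * k ^ d := by rw [Finset.sum_const, smul_eq_mul]

/-- If `k > (2d+1)n` and `u ∈ A^(F_k)` has exactly `j` distinct `n`-cube subpatterns, then
for any `n`-repeat cover `J` of `u`, `k^d − |A(J)| ≤ j·(1 + 4dn/k)`. -/
theorem stmt11 {A : Type*} {d n k j : ℕ} (hd : 1 ≤ d) (hn : 1 ≤ n)
    (hk : (2 * d + 1) * n < k) (u : (Fin d → ℤ) → A)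
    (hj : (WnOf n (Fcube d k) u).ncard = j)
    (J : Set ((Fin d → ℤ) × (Fin d → ℤ)))
    (hJ : IsRepeatCover n (Fcube d k) u J) :
    (k : ℝ) ^ d - ((repArea n J).ncard : ℝ) ≤
      (j : ℝ) * (1 + 4 * d * n / k) := by
  classical
  have hnk : n < k := lt_of_le_of_lt (Nat.le_mul_of_pos_left n (by omega)) hk
  set mZ : ℤ := (k:ℤ) - n + 1 with hmZ
  have hmpos : 0 < mZ := by omega
  have memF : ∀ x : Fin d → ℤ, x ∈ boxF' d k ↔ ∀ i, 1 ≤ x i ∧ x i ≤ (k:ℤ) := by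
    intro x
    rw [boxF', Fintype.mem_piFinset]
    exact forall_congr' fun i => Finset.mem_Icc
  have memG : ∀ v : Fin d → ℤ, v ∈ boxG' d n k ↔ ∀ i, 1 ≤ v i ∧ v i ≤ mZ := by
    intro v
    rw [boxG', Fintype.mem_piFinset]
    exact forall_congr' fun i => Finset.mem_Icc
  have hFeq : Fcube d k = ↑(boxF' d k) := by
    ext x
    rw [Finset.mem_coe, memF]
    rfl
  have cubeIn_iff : ∀ v : Fin d → ℤ, cubeIn n (Fcube d k) v ↔ v ∈ boxG' d n k := by
    intro v
    rw [memG]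
    constructor
    · intro h i
      have hv : v ∈ cubeSet n v := by
        simp only [cubeSet, Set.mem_setOf_eq]
        intro j'
        constructor <;> omega
      have h1 := h hv i
      have hx : Function.update v i (v i + n - 1) ∈ cubeSet n v := by
        simp only [cubeSet, Set.mem_setOf_eq]
        intro j'
        by_cases hj' : j' = i
        · subst hj'
          rw [Function.update_self]
          constructor <;> omega
        · rw [Function.update_of_ne hj']
          constructor <;> omega
      have h2 := h hx i
      rw [Function.update_self] at h2
      exact ⟨h1.1, by omega⟩
    · intro h x hx i
      have h1 := h i
      have h2 := hx i
      exact ⟨by omega, by omega⟩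
  have spRefl : ∀ v, samePat n u v v := fun v t ht => rfl
  have spSymm : ∀ {a b : Fin d → ℤ}, samePat n u a b → samePat n u b a :=
    fun h t ht => (h t ht).symm
  have spTrans : ∀ {a b c : Fin d → ℤ}, samePat n u a b → samePat n u b c → samePat n u a c :=
    fun h1 h2 t ht => (h1 t ht).trans (h2 t ht)
  obtain ⟨Mf, hMsub, hMmem⟩ : ∃ Mf : Finset (Fin d → ℤ), Mf ⊆ boxG' d n k ∧
      ∀ v, v ∈ Mf ↔ v ∈ boxG' d n k ∧ ∀ w ∈ boxG' d n k, samePat n u w v → lexLe v w :=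
    ⟨(boxG' d n k).filter (fun v => ∀ w ∈ boxG' d n k, samePat n u w v → lexLe v w),
      Finset.filter_subset _ _, fun v => Finset.mem_filter⟩
  obtain ⟨Pf, hPsub, hPmem⟩ : ∃ Pf : Finset (Fin d → ℤ), Pf ⊆ boxF' d k ∧
      ∀ x, x ∈ Pf ↔ x ∈ boxF' d k ∧
        ∀ v ∈ boxG' d n k, (∀ i, v i ≤ x i ∧ x i < v i + n) → v ∈ Mf :=
    ⟨(boxF' d k).filter (fun x => ∀ v ∈ boxG' d n k,
        (∀ i, v i ≤ x i ∧ x i < v i + n) → v ∈ Mf),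
      Finset.filter_subset _ _, fun x => Finset.mem_filter⟩
  -- a non-minimal corner yields a repeat, hence its cube lies in the repeat area
  have hrep : ∀ v ∈ boxG' d n k, v ∉ Mf → cubeSet n v ⊆ repArea n J := by
    intro v hvG hvM
    obtain ⟨v₁, hv₁O, hv₁min⟩ := exists_lex_min
      ((boxG' d n k).filter (fun w => samePat n u w v))
      ⟨v, Finset.mem_filter.mpr ⟨hvG, spRefl v⟩⟩
    rw [Finset.mem_filter] at hv₁O
    have hmin : ∀ w ∈ boxG' d n k, samePat n u w v → lexLe v₁ w := by
      intro w hw hsw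
      exact hv₁min w (Finset.mem_filter.mpr ⟨hw, hsw⟩)
    have hne : v₁ ≠ v := by
      intro he
      apply hvM
      rw [hMmem]
      exact ⟨hvG, fun w hw hsw => he ▸ hmin w hw hsw⟩
    have hisrep : IsRepeat n (Fcube d k) u v₁ v :=
      ⟨(cubeIn_iff v₁).mpr hv₁O.1, (cubeIn_iff v).mpr hvG, hne, hv₁O.2, by
        intro w hw hsw
        exact hmin w ((cubeIn_iff w).mp hw) (spTrans hsw hv₁O.2)⟩
    exact hJ.2 v₁ v hisrep
  -- bad points all lie in Pf
  have hbad : Fcube d k \ repArea n J ⊆ ↑Pf := by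
    rintro x ⟨hxF, hxA⟩
    rw [Finset.mem_coe, hPmem]
    have hxF' : x ∈ boxF' d k := by
      rw [hFeq] at hxF
      exact hxF
    refine ⟨hxF', ?_⟩
    intro v hvG hcov
    by_contra hvM
    exact hxA (hrep v hvG hvM hcov)
  -- |Mf| ≤ j
  have hΦeq : WnOf n (Fcube d k) u =
      ↑((boxG' d n k).image (fun v (t : Fin d → Fin n) => u (fun i => v i + (t i : ℤ)))) := by
    ext w
    rw [Finset.mem_coe, Finset.mem_image]
    constructor
    · rintro ⟨v, hv, hw⟩
      exact ⟨v, (cubeIn_iff v).mp hv, (funext fun t => (hw t).symm)⟩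
    · rintro ⟨v, hvG, rfl⟩
      exact ⟨v, (cubeIn_iff v).mpr hvG, fun t => rfl⟩
  have hMj : Mf.card ≤ j := by
    rw [← hj, hΦeq, Set.ncard_coe_finset]
    apply Finset.card_le_card_of_injOn
      (fun v (t : Fin d → Fin n) => u (fun i => v i + (t i : ℤ)))
    · intro v hv
      exact Finset.mem_image_of_mem _ (hMsub hv)
    · intro v hv v' hv' he
      rw [Finset.mem_coe, hMmem] at hv hv'
      obtain ⟨hvG, hvmin⟩ := hv
      obtain ⟨hv'G, hv'min⟩ := hv'
      have hsp : samePat n u v v' := by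
        intro t ht
        have hτlt : ∀ i, (t i).toNat < n := by
          intro i
          have := ht i
          omega
        have e1 : u (ptAdd v t) =
            (fun (t' : Fin d → Fin n) => u (fun i => v i + (t' i : ℤ)))
              (fun i => ⟨(t i).toNat, hτlt i⟩) := by
          congr 1
          funext i
          simp [ptAdd, Int.toNat_of_nonneg (ht i).1]
        have e2 : u (ptAdd v' t) =
            (fun (t' : Fin d → Fin n) => u (fun i => v' i + (t' i : ℤ)))
              (fun i => ⟨(t i).toNat, hτlt i⟩) := by
          congr 1
          funext i
          simp [ptAdd, Int.toNat_of_nonneg (ht i).1]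
        exact e1.trans ((congrFun he _).trans e2.symm)
      exact lexLe_antisymm' (hvmin v' hv'G (spSymm hsp)) (hv'min v hvG hsp)
  -- counting
  have hcount := countLemma d n k hn hnk Mf Pf hMsub hPsub (fun x hx => ((hPmem x).mp hx).2)
  -- set cardinalities
  have hAsub : repArea n J ⊆ Fcube d k := by
    intro y hy
    simp only [repArea, Set.mem_iUnion] at hy
    obtain ⟨p, hp, hyc⟩ := hy
    exact (hJ.1 p hp).2.1 hyc
  have hFcard : (Fcube d k).ncard = k ^ d := by
    rw [hFeq, Set.ncard_coe_finset, boxF', Fintype.card_piFinset]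
    have h1 : (Finset.Icc (1:ℤ) (k:ℤ)).card = k := by
      rw [Int.card_Icc]
      omega
    rw [Finset.prod_congr rfl (fun i _ => h1), Finset.prod_const, Finset.card_univ,
      Fintype.card_fin]
  have hsplit : (k:ℝ)^d - ((repArea n J).ncard : ℝ) ≤
      ((Fcube d k \ repArea n J).ncard : ℝ) := by
    have h1 : (Fcube d k).ncard ≤
        (Fcube d k \ repArea n J).ncard + (repArea n J).ncard := by
      have he : Fcube d k = (Fcube d k \ repArea n J) ∪ repArea n J := by
        rw [Set.diff_union_self, Set.union_eq_self_of_subset_right hAsub]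
      calc (Fcube d k).ncard = ((Fcube d k \ repArea n J) ∪ repArea n J).ncard := by rw [← he]
        _ ≤ _ := Set.ncard_union_le _ _
    rw [hFcard] at h1
    have h2 : ((k:ℕ)^d : ℝ) ≤ ((Fcube d k \ repArea n J).ncard : ℝ) +
        ((repArea n J).ncard : ℝ) := by exact_mod_cast h1
    push_cast at h2
    linarith
  have hPbound : (Fcube d k \ repArea n J).ncard ≤ Pf.card := by
    rw [← Set.ncard_coe_finset Pf]
    exact Set.ncard_le_ncard hbad Pf.finite_toSet
  -- real arithmetic
  set mR : ℝ := (mZ.toNat : ℝ) with hmRdef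
  have hmRk : mR = (k:ℝ) - n + 1 := by
    have h1 : ((mZ.toNat : ℤ) : ℝ) = ((mZ : ℤ) : ℝ) := by
      rw [Int.toNat_of_nonneg hmpos.le]
    rw [hmRdef]
    push_cast at h1 ⊢
    rw [h1, hmZ]
    push_cast
    ring
  have hnR : (1:ℝ) ≤ (n:ℝ) := by exact_mod_cast hn
  have hdR : (1:ℝ) ≤ (d:ℝ) := by exact_mod_cast hd
  have hkcR : ((2*d+1)*n : ℝ) < (k:ℝ) := by exact_mod_cast hk
  push_cast at hkcR
  have hkR : (0:ℝ) < (k:ℝ) := by nlinarith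
  have hmRpos : 0 < mR := by rw [hmRk]; nlinarith
  have hcountR : (Pf.card : ℝ) * mR^d ≤ (j:ℝ) * (k:ℝ)^d := by
    have h0 := (Nat.cast_le (α := ℝ)).mpr hcount
    push_cast at h0
    rw [← hmRdef] at h0
    have h1 : (Pf.card : ℝ) * mR^d ≤ (Mf.card : ℝ) * (k:ℝ)^d := h0
    have h2 : (Mf.card : ℝ) ≤ (j:ℝ) := by exact_mod_cast hMj
    have h3 : (0:ℝ) ≤ (k:ℝ)^d := le_of_lt (pow_pos hkR d)
    nlinarith
  set t : ℝ := ((n:ℝ) - 1)/mR with htdef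
  have ht0 : 0 ≤ t := div_nonneg (by linarith) hmRpos.le
  have hdt : (d:ℝ) * t ≤ 1/2 := by
    rw [htdef, mul_div_assoc']
    rw [div_le_iff₀ hmRpos]
    rw [hmRk]
    nlinarith
  have hbpow : ((k:ℝ)/mR)^d ≤ 1 + 2*(d:ℝ)*t := by
    have he : (k:ℝ)/mR = 1 + t := by
      rw [htdef]
      field_simp
      rw [hmRk]
      ring
    rw [he]
    exact bern d t ht0 hdt
  have hfinal2 : 1 + 2*(d:ℝ)*t ≤ 1 + 4*(d:ℝ)*(n:ℝ)/(k:ℝ) := by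
    have he : 2*(d:ℝ)*t = (2*(d:ℝ)*((n:ℝ)-1))/mR := by
      rw [htdef]; ring
    rw [he]
    have hcross : (2*(d:ℝ)*((n:ℝ)-1))/mR ≤ (4*(d:ℝ)*(n:ℝ))/(k:ℝ) := by
      rw [div_le_div_iff₀ hmRpos hkR, hmRk]
      have hnn : (0:ℝ) < (n:ℝ) := by linarith
      have h2 : (0:ℝ) ≤ (n:ℝ)*(k:ℝ) + (k:ℝ) - 2*(n:ℝ)^2 + 2*(n:ℝ) := by
        nlinarith [mul_lt_mul_of_pos_left hkcR hnn]
      nlinarith [mul_nonneg (show (0:ℝ) ≤ 2*(d:ℝ) by linarith) h2]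
    linarith [hcross]
  have hPle : (Pf.card : ℝ) ≤ (j:ℝ) * ((k:ℝ)/mR)^d := by
    have h1 : (Pf.card : ℝ) ≤ (j:ℝ)*(k:ℝ)^d / mR^d :=
      (le_div_iff₀ (pow_pos hmRpos d)).mpr hcountR
    calc (Pf.card:ℝ) ≤ (j:ℝ)*(k:ℝ)^d / mR^d := h1
      _ = (j:ℝ) * ((k:ℝ)/mR)^d := by rw [div_pow]; ring
  have hjnn : (0:ℝ) ≤ (j:ℝ) := Nat.cast_nonneg j
  calc (k:ℝ)^d - ((repArea n J).ncard : ℝ)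
      ≤ ((Fcube d k \ repArea n J).ncard : ℝ) := hsplit
    _ ≤ (Pf.card : ℝ) := by exact_mod_cast hPbound
    _ ≤ (j:ℝ) * ((k:ℝ)/mR)^d := hPle
    _ ≤ (j:ℝ) * (1 + 2*(d:ℝ)*t) := mul_le_mul_of_nonneg_left hbpow hjnn
    _ ≤ (j:ℝ) * (1 + 4*(d:ℝ)*(n:ℝ)/(k:ℝ)) := mul_le_mul_of_nonneg_left hfinal2 hjnn
end

section
/- Let A be a finite alphabet, d ≥ 1, and let X_ω ⊆ A^(ℤ^d) be the random ℤ^d-SFT obtained by independently allowing each pattern in A^(F_n) with probability α. Then the probability that X_ω contains no finite orbit is at most the product over all finite orbits γ of the full shift with |γ| ≤ n/2 of (1 − α^|γ|). -/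
open MeasureTheory

/-- The shift action of `ℤ^d` on configurations `(Fin d → ℤ) → A`. -/
def shiftZd {A : Type*} {d : ℕ} (p : Fin d → ℤ) (x : (Fin d → ℤ) → A) : (Fin d → ℤ) → A :=
  fun q => x (fun i => p i + q i)

/-- A finite orbit of the `ℤ^d` shift action: a nonempty finite set that equals the
full orbit of each of its points. -/
def IsFiniteOrbit {A : Type*} {d : ℕ} (γ : Set ((Fin d → ℤ) → A)) : Prop :=
  γ.Finite ∧ γ.Nonempty ∧ ∀ x ∈ γ, γ = {y | ∃ p : Fin d → ℤ, y = shiftZd p x}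

/-- The `F_n`-pattern of the configuration `x` at the translate of `F_n` with corner `v`. -/
def patternOf {A : Type*} {d n : ℕ} (x : (Fin d → ℤ) → A) (v : Fin d → ℤ) :
    (Fin d → Fin n) → A :=
  fun t => x (fun i => v i + (t i : ℤ))

/-- The product Bernoulli(α) measure on `Ω_n = {0,1}^(A^(F_n))`: each `F_n`-pattern is
independently allowed (`true`) with probability `α`. -/
noncomputable def bernoulliProd (A : Type*) [Fintype A] [DecidableEq A] (d n : ℕ)
    (α : ENNReal) (hα : α ≤ 1) : Measure (((Fin d → Fin n) → A) → Bool) :=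
  Measure.pi (fun _ => (PMF.bernoulli α.toNNReal (by simpa using ENNReal.toNNReal_mono ENNReal.one_ne_top hα)).toMeasure)

/-- The (random) `ℤ^d`-SFT determined by `ω`: configurations all of whose `F_n`-patterns
are allowed by `ω`. -/
def sftOfOmega {A : Type*} {d n : ℕ} (ω : ((Fin d → Fin n) → A) → Bool) :
    Set ((Fin d → ℤ) → A) :=
  {x | ∀ v : Fin d → ℤ, ω (patternOf x v) = true}

set_option linter.unusedSectionVars false

section Comb

variable {A : Type*} {d : ℕ}

/-- `x` is periodic with period `p` in direction `i`. -/
def PerIn (x : (Fin d → ℤ) → A) (i : Fin d) (p : ℤ) : Prop :=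
  ∀ q : Fin d → ℤ, x (fun j => q j + if j = i then p else 0) = x q

lemma PerIn.smul {x : (Fin d → ℤ) → A} {i : Fin d} {p : ℤ} (h : PerIn x i p) (c : ℤ)
    (q : Fin d → ℤ) : x (fun j => q j + if j = i then c * p else 0) = x q := by
  induction c using Int.induction_on generalizing q with
  | zero => simp
  | succ c ih =>
      have h1 := h (fun j => q j + if j = i then (c : ℤ) * p else 0)
      have e1 : (fun j => (q j + if j = i then (c : ℤ) * p else 0) + if j = i then p else 0)
          = fun j => q j + if j = i then ((c : ℤ) + 1) * p else 0 := by
        funext j; split_ifs <;> ring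
      rw [e1] at h1
      rw [h1, ih]
  | pred c ih =>
      have h1 := h (fun j => q j + if j = i then (-(c : ℤ) - 1) * p else 0)
      have e1 : (fun j => (q j + if j = i then (-(c : ℤ) - 1) * p else 0) + if j = i then p else 0)
          = fun j => q j + if j = i then (-(c : ℤ)) * p else 0 := by
        funext j; split_ifs <;> ring
      rw [e1] at h1
      rw [← h1]
      exact ih q

lemma PerIn.reduce {x : (Fin d → ℤ) → A} {p : Fin d → ℤ} (hp : ∀ i, PerIn x i (p i))
    {q r : Fin d → ℤ} (hdvd : ∀ j, p j ∣ (q j - r j)) : x q = x r := by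
  classical
  have main : ∀ s : Finset (Fin d), x (fun j => if j ∈ s then r j else q j) = x q := by
    intro s
    induction s using Finset.induction_on with
    | empty => simp
    | @insert i s hi ih =>
        obtain ⟨c, hc⟩ := hdvd i
        have e1 : (fun j => if j ∈ insert i s then r j else q j)
            = fun j => (if j ∈ s then r j else q j) + if j = i then (-c) * p i else 0 := by
          funext j
          by_cases hji : j = i
          · subst hji
            rw [if_pos (Finset.mem_insert_self _ _), if_neg hi, if_pos rfl]
            linear_combination -hc
          · rw [if_neg hji]
            by_cases hjs : j ∈ s
            · rw [if_pos hjs, if_pos (Finset.mem_insert_of_mem hjs)]; ring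
            · rw [if_neg hjs, if_neg (by simp [hji, hjs]), add_zero]
        rw [e1, PerIn.smul (hp i) (-c) _, ih]
  have := main Finset.univ
  simp only [Finset.mem_univ, if_pos] at this
  exact this.symm

lemma shift_eq_perIn {x : (Fin d → ℤ) → A} {i : Fin d} {a b : ℤ}
    (h : shiftZd (fun j => if j = i then a else 0) x
       = shiftZd (fun j => if j = i then b else 0) x) : PerIn x i (b - a) := by
  intro q
  have h1 := congrFun h (fun j => q j - if j = i then a else 0)
  simp only [shiftZd] at h1
  have e1 : (fun j => (if j = i then a else 0) + (q j - if j = i then a else 0)) = q := by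
    funext j; split_ifs <;> ring
  have e2 : (fun j => (if j = i then b else 0) + (q j - if j = i then a else 0))
      = fun j => q j + if j = i then b - a else 0 := by
    funext j; split_ifs <;> ring
  rw [e1, e2] at h1
  exact h1.symm

lemma mem_orbit_shift {γ : Set ((Fin d → ℤ) → A)} (hγ : IsFiniteOrbit γ) {x} (hx : x ∈ γ)
    (v : Fin d → ℤ) : shiftZd v x ∈ γ := by
  rw [hγ.2.2 x hx]; exact ⟨v, rfl⟩

lemma exists_period {γ : Set ((Fin d → ℤ) → A)} (hγ : IsFiniteOrbit γ) {x} (hx : x ∈ γ)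
    (i : Fin d) : ∃ p : ℤ, 1 ≤ p ∧ p ≤ (γ.ncard : ℤ) ∧ PerIn x i p := by
  classical
  set m := γ.ncard with hm
  have hmaps : ∀ k : Fin (m + 1),
      shiftZd (fun j => if j = i then ((k : ℕ) : ℤ) else 0) x ∈ hγ.1.toFinset := by
    intro k
    rw [Set.Finite.mem_toFinset]
    exact mem_orbit_shift hγ hx _
  have hcardt : (hγ.1.toFinset).card = m := by
    rw [hm, Set.ncard_eq_toFinset_card _ hγ.1]
  have hcard : (hγ.1.toFinset).card < (Finset.univ : Finset (Fin (m + 1))).card := by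
    rw [hcardt, Finset.card_univ, Fintype.card_fin]; omega
  obtain ⟨a, -, b, -, hab, heq⟩ :=
    Finset.exists_ne_map_eq_of_card_lt_of_maps_to hcard (fun k _ => hmaps k)
  rcases lt_or_gt_of_ne (fun h => hab h) with hlt | hlt
  · refine ⟨(b : ℕ) - (a : ℕ), by
      have : (a : ℕ) < (b : ℕ) := hlt
      omega, by
      have : (b : ℕ) ≤ m := Nat.lt_succ_iff.mp b.isLt
      omega, ?_⟩
    have := shift_eq_perIn (x := x) (i := i) (a := ((a : ℕ) : ℤ)) (b := ((b : ℕ) : ℤ)) heq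
    exact this
  · refine ⟨(a : ℕ) - (b : ℕ), by
      have : (b : ℕ) < (a : ℕ) := hlt
      omega, by
      have : (a : ℕ) ≤ m := Nat.lt_succ_iff.mp a.isLt
      omega, ?_⟩
    have := shift_eq_perIn (x := x) (i := i) (a := ((b : ℕ) : ℤ)) (b := ((a : ℕ) : ℤ)) heq.symm
    exact this

lemma key_eq {n : ℕ} {x y : (Fin d → ℤ) → A} {p p' : Fin d → ℤ} {m m' : ℕ}
    (hmn : m + m' ≤ n)
    (hpx : ∀ i, PerIn x i (p i)) (hp1 : ∀ i, 1 ≤ p i) (hpm : ∀ i, p i ≤ (m : ℤ))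
    (hpy : ∀ i, PerIn y i (p' i)) (hp'1 : ∀ i, 1 ≤ p' i) (hp'm : ∀ i, p' i ≤ (m' : ℤ))
    (hagree : ∀ q : Fin d → ℤ, (∀ j, 0 ≤ q j ∧ q j < (n : ℤ)) → x q = y q) : x = y := by
  have hmod' : ∀ (w : Fin d → ℤ) (q : Fin d → ℤ) (j : Fin d), (∀ i, 1 ≤ w i) →
      w j ∣ q j - q j % w j := by
    intro w q j hw
    refine ⟨q j / w j, ?_⟩
    have := Int.mul_ediv_add_emod (q j) (w j)
    linarith
  -- Step 1 : y is periodic with period `p i` in direction `i`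
  have hper : ∀ i, PerIn y i (p i) := by
    intro i q
    set r : Fin d → ℤ := fun j => q j % p' j with hr
    have hr0 : ∀ j, 0 ≤ r j := fun j => Int.emod_nonneg _ (by have := hp'1 j; omega)
    have hrlt : ∀ j, r j < p' j := fun j => Int.emod_lt_of_pos _ (by have := hp'1 j; omega)
    have hdvd : ∀ j, p' j ∣ q j - r j := fun j => hmod' p' q j hp'1
    have e1 : y (fun j => q j + if j = i then p i else 0)
        = y (fun j => r j + if j = i then p i else 0) := by
      refine PerIn.reduce hpy ?_
      intro j
      have : (q j + if j = i then p i else 0) - (r j + if j = i then p i else 0)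
          = q j - r j := by ring
      rw [this]; exact hdvd j
    have h4 : (m : ℤ) + (m' : ℤ) ≤ (n : ℤ) := by exact_mod_cast hmn
    have hbox : ∀ j, 0 ≤ (r j + if j = i then p i else 0) ∧
        (r j + if j = i then p i else 0) < (n : ℤ) := by
      intro j
      by_cases hj : j = i
      · subst hj
        rw [if_pos rfl]
        have h1 := hrlt j; have h2 := hp'm j; have h3 := hpm j
        have h5 := hp1 j; have h6 := hr0 j
        omega
      · rw [if_neg hj, add_zero]
        have h1 := hrlt j; have h2 := hp'm j; have h6 := hr0 j
        omega
    have e2 : x (fun j => r j + if j = i then p i else 0)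
        = y (fun j => r j + if j = i then p i else 0) := hagree _ hbox
    have e3 : x (fun j => r j + if j = i then p i else 0) = x r := hpx i r
    have hboxr : ∀ j, 0 ≤ r j ∧ r j < (n : ℤ) := by
      intro j
      have h1 := hrlt j
      have h2 := hp'm j
      exact ⟨hr0 j, by omega⟩
    have e4 : x r = y r := hagree _ hboxr
    have e5 : y r = y q := PerIn.reduce hpy (fun j => dvd_sub_comm.mp (hdvd j))
    calc y (fun j => q j + if j = i then p i else 0)
        = y (fun j => r j + if j = i then p i else 0) := e1
      _ = x (fun j => r j + if j = i then p i else 0) := e2.symm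
      _ = x r := e3
      _ = y r := e4
      _ = y q := e5
  -- Step 2 : conclude
  funext q
  set r : Fin d → ℤ := fun j => q j % p j with hr
  have hr0 : ∀ j, 0 ≤ r j := fun j => Int.emod_nonneg _ (by have := hp1 j; omega)
  have hrlt : ∀ j, r j < p j := fun j => Int.emod_lt_of_pos _ (by have := hp1 j; omega)
  have hdvd : ∀ j, p j ∣ q j - r j := fun j => hmod' p q j hp1
  have h4 : (m : ℤ) + (m' : ℤ) ≤ (n : ℤ) := by exact_mod_cast hmn
  have hboxr : ∀ j, 0 ≤ r j ∧ r j < (n : ℤ) := by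
    intro j
    have h1 := hrlt j
    have h2 := hpm j
    exact ⟨hr0 j, by omega⟩
  calc x q = x r := PerIn.reduce hpx hdvd
    _ = y r := hagree _ hboxr
    _ = y q := PerIn.reduce hper (fun j => dvd_sub_comm.mp (hdvd j))


lemma ncard_pos_of_orbit {γ : Set ((Fin d → ℤ) → A)} (hγ : IsFiniteOrbit γ) : 1 ≤ γ.ncard := by
  have := (Set.ncard_pos hγ.1).mpr hγ.2.1
  omega

lemma pattern_eq_imp {n : ℕ} {γ γ' : Set ((Fin d → ℤ) → A)} (hγ : IsFiniteOrbit γ)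
    (hγ' : IsFiniteOrbit γ') (hle : 2 * γ.ncard ≤ n) (hle' : 2 * γ'.ncard ≤ n)
    {x y : (Fin d → ℤ) → A} {v w : Fin d → ℤ} (hx : x ∈ γ) (hy : y ∈ γ')
    (hpat : patternOf (n := n) x v = patternOf y w) :
    shiftZd v x = shiftZd w y ∧ γ = γ' := by
  set x' := shiftZd v x with hx'def
  set y' := shiftZd w y with hy'def
  have hx' : x' ∈ γ := mem_orbit_shift hγ hx v
  have hy' : y' ∈ γ' := mem_orbit_shift hγ' hy w
  choose p hp1 hpm hper using fun i => exists_period hγ hx' i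
  choose p' hp'1 hp'm hper' using fun i => exists_period hγ' hy' i
  have hagree : ∀ q : Fin d → ℤ, (∀ j, 0 ≤ q j ∧ q j < (n : ℤ)) → x' q = y' q := by
    intro q hq
    have hn0 : ∀ j, (q j).toNat < n := by
      intro j
      have := (hq j).1
      have := (hq j).2
      omega
    set t : Fin d → Fin n := fun j => ⟨(q j).toNat, hn0 j⟩ with ht
    have h1 := congrFun hpat t
    have et : ∀ j, ((t j : ℕ) : ℤ) = q j := by
      intro j
      simp only [ht]
      exact Int.toNat_of_nonneg (hq j).1
    have e1 : (fun i => v i + ((t i : ℕ) : ℤ)) = fun i => v i + q i := by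
      funext i; rw [et i]
    have e2 : (fun i => w i + ((t i : ℕ) : ℤ)) = fun i => w i + q i := by
      funext i; rw [et i]
    simp only [patternOf, e1, e2] at h1
    exact h1
  have hkey : x' = y' := by
    refine key_eq (m := γ.ncard) (m' := γ'.ncard) (by omega) hper hp1 hpm hper' hp'1 hp'm hagree
  refine ⟨hkey, ?_⟩
  rw [hγ.2.2 x' hx', hγ'.2.2 y' hy', hkey]

lemma shiftZd_zero {x : (Fin d → ℤ) → A} : shiftZd (fun _ => (0 : ℤ)) x = x := by
  funext q
  simp [shiftZd]

lemma pattern_shift {n : ℕ} (x : (Fin d → ℤ) → A) (v : Fin d → ℤ) :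
    patternOf (n := n) (shiftZd v x) (fun _ => 0) = patternOf x v := by
  funext t
  simp [patternOf, shiftZd]

end Comb

section Meas

variable {I : Type*} [Fintype I]

/-- `B` depends only on the coordinates in `s`. -/
def DOn (s : Set I) (B : Set (I → Bool)) : Prop :=
  ∀ ω ω' : I → Bool, (∀ u ∈ s, ω u = ω' u) → (ω ∈ B ↔ ω' ∈ B)

lemma DOn.mono {s t : Set I} {B : Set (I → Bool)} (hst : s ⊆ t) (h : DOn s B) : DOn t B :=
  fun ω ω' hagree => h ω ω' (fun u hu => hagree u (hst hu))

lemma DOn.compl {s : Set I} {B : Set (I → Bool)} (h : DOn s B) : DOn s Bᶜ :=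
  fun ω ω' hagree => not_congr (h ω ω' hagree)

lemma DOn.biInter {ι : Type*} {S : Finset ι} {W : ι → Set I} {B : ι → Set (I → Bool)}
    (h : ∀ γ ∈ S, DOn (W γ) (B γ)) : DOn (⋃ γ ∈ S, W γ) (⋂ γ ∈ S, B γ) := by
  intro ω ω' hagree
  simp only [Set.mem_iInter]
  refine forall_congr' fun γ => forall_congr' fun hγ => ?_
  exact h γ hγ ω ω' (fun u hu => hagree u (Set.mem_biUnion hγ hu))

lemma measurableSet_all {X : Type*} [Finite X] [MeasurableSpace X]
    [MeasurableSingletonClass X] (s : Set X) : MeasurableSet s :=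
  (Set.toFinite s).measurableSet

lemma fact_mul (ν : Measure Bool) [IsProbabilityMeasure ν]
    (s : Set I) (B C : Set (I → Bool)) (hB : DOn s B) (hC : DOn sᶜ C) :
    Measure.pi (fun _ : I => ν) (B ∩ C) =
      Measure.pi (fun _ : I => ν) B * Measure.pi (fun _ : I => ν) C := by
  classical
  set e := MeasurableEquiv.piEquivPiSubtypeProd (fun _ : I => Bool) (· ∈ s) with he
  have mp := measurePreserving_piEquivPiSubtypeProd (fun _ : I => ν) (· ∈ s)
  set B₁ : Set ({u : I // u ∈ s} → Bool) :=
    {g | (fun u => if h : u ∈ s then g ⟨u, h⟩ else false) ∈ B} with hB₁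
  set C₁ : Set ({u : I // ¬ u ∈ s} → Bool) :=
    {g | (fun u => if h : u ∈ s then false else g ⟨u, h⟩) ∈ C} with hC₁
  have hmemB : ∀ ω : I → Bool, ω ∈ B ↔ (fun u : {u : I // u ∈ s} => ω u) ∈ B₁ := by
    intro ω
    refine hB ω _ ?_
    intro u hu
    simp [hu]
  have hmemC : ∀ ω : I → Bool, ω ∈ C ↔ (fun u : {u : I // ¬ u ∈ s} => ω u) ∈ C₁ := by
    intro ω
    refine hC ω _ ?_
    intro u hu
    simp only [Set.mem_compl_iff] at hu
    simp [hu]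
  have claim : ∀ (B' : Set ({u : I // u ∈ s} → Bool)) (C' : Set ({u : I // ¬ u ∈ s} → Bool)),
      Measure.pi (fun _ : I => ν) (e ⁻¹' (B' ×ˢ C')) =
        Measure.pi (fun _ : {u : I // u ∈ s} => ν) B' *
        Measure.pi (fun _ : {u : I // ¬ u ∈ s} => ν) C' := by
    intro B' C'
    rw [mp.measure_preimage_equiv]
    exact Measure.prod_prod B' C'
  have eB : e ⁻¹' (B₁ ×ˢ (Set.univ : Set ({u : I // ¬ u ∈ s} → Bool))) = B := by
    ext ω
    simp only [Set.mem_preimage, Set.mem_prod, Set.mem_univ, and_true]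
    exact (hmemB ω).symm
  have eC : e ⁻¹' ((Set.univ : Set ({u : I // u ∈ s} → Bool)) ×ˢ C₁) = C := by
    ext ω
    simp only [Set.mem_preimage, Set.mem_prod, Set.mem_univ, true_and]
    exact (hmemC ω).symm
  have eBC : e ⁻¹' (B₁ ×ˢ C₁) = B ∩ C := by
    ext ω
    simp only [Set.mem_preimage, Set.mem_prod, Set.mem_inter_iff]
    exact and_congr (hmemB ω).symm (hmemC ω).symm
  rw [← eBC, ← eB, ← eC, claim, claim, claim]
  simp [measure_univ]

lemma prod_fact (ν : Measure Bool) [IsProbabilityMeasure ν]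
    {ι : Type*} (S : Finset ι) (W : ι → Set I) (B : ι → Set (I → Bool))
    (hdep : ∀ γ ∈ S, DOn (W γ) (B γ))
    (hdisj : ∀ γ ∈ S, ∀ γ' ∈ S, γ ≠ γ' → Disjoint (W γ) (W γ')) :
    Measure.pi (fun _ : I => ν) (⋂ γ ∈ S, B γ) =
      ∏ γ ∈ S, Measure.pi (fun _ : I => ν) (B γ) := by
  classical
  induction S using Finset.induction_on with
  | empty => simp
  | @insert γ₀ S hγ₀ ih =>
      have h1 : DOn (W γ₀) (B γ₀) := hdep _ (Finset.mem_insert_self _ _)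
      have h2 : DOn (W γ₀)ᶜ (⋂ γ ∈ S, B γ) := by
        refine DOn.mono ?_ (DOn.biInter (fun γ hγ => hdep γ (Finset.mem_insert_of_mem hγ)))
        intro u hu
        simp only [Set.mem_iUnion] at hu
        obtain ⟨γ, hγ, hu⟩ := hu
        have hd := hdisj γ₀ (Finset.mem_insert_self _ _) γ (Finset.mem_insert_of_mem hγ)
          (fun h => hγ₀ (h ▸ hγ))
        exact fun hu0 => Set.disjoint_left.mp hd hu0 hu
      have e1 : (⋂ γ ∈ insert γ₀ S, B γ) = B γ₀ ∩ ⋂ γ ∈ S, B γ := by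
        simp [Set.biInter_insert]
      rw [e1, Finset.prod_insert hγ₀,
        fact_mul ν (W γ₀) _ _ h1 (by
          intro ω ω' hagree
          exact h2 ω ω' (fun u hu => hagree u hu)),
        ih (fun γ hγ => hdep γ (Finset.mem_insert_of_mem hγ))
          (fun γ hγ γ' hγ' hne => hdisj γ (Finset.mem_insert_of_mem hγ)
            γ' (Finset.mem_insert_of_mem hγ') hne)]

end Meas

section Meas2

variable {I : Type*} [Fintype I]

lemma meas_allTrue {α : ENNReal} (hα : α ≤ 1) (W : Finset I) :
    Measure.pi (fun _ : I => (PMF.bernoulli α.toNNReal (by simpa using ENNReal.toNNReal_mono ENNReal.one_ne_top hα)).toMeasure)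
      {ω : I → Bool | ∀ u ∈ W, ω u = true} = α ^ W.card := by
  classical
  have hset : {ω : I → Bool | ∀ u ∈ W, ω u = true}
      = Set.pi Set.univ (fun u => if u ∈ W then {true} else Set.univ) := by
    ext ω
    simp only [Set.mem_setOf_eq, Set.mem_pi, Set.mem_univ, forall_true_left]
    constructor
    · intro h u
      by_cases hu : u ∈ W
      · rw [if_pos hu]
        simp [h u hu]
      · rw [if_neg hu]
        trivial
    · intro h u hu
      have := h u
      rw [if_pos hu] at this
      simpa using this
  rw [hset, Measure.pi_pi]
  have hν : (PMF.bernoulli α.toNNReal (by simpa using ENNReal.toNNReal_mono ENNReal.one_ne_top hα)).toMeasure ({true} : Set Bool) = α := by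
    rw [PMF.toMeasure_apply_singleton _ _ (measurableSet_singleton _)]
    exact (PMF.bernoulli_apply _ true).trans (ENNReal.coe_toNNReal (ne_top_of_le_ne_top ENNReal.one_ne_top hα))
  calc (∏ u : I, (PMF.bernoulli α.toNNReal (by simpa using ENNReal.toNNReal_mono ENNReal.one_ne_top hα)).toMeasure (if u ∈ W then ({true} : Set Bool) else Set.univ))
      = ∏ u : I, (if u ∈ W then α else 1) := by
        refine Finset.prod_congr rfl fun u _ => ?_
        split_ifs
        · exact hν
        · exact measure_univ
    _ = ∏ u ∈ Finset.univ.filter (· ∈ W), α := (Finset.prod_filter _ _).symm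
    _ = α ^ W.card := by rw [Finset.filter_univ_mem, Finset.prod_const]

end Meas2


/-- The probability that the random `ℤ^d`-SFT `X_ω` contains no finite orbit is at most
the product over finite orbits `γ` of the full shift with `|γ| ≤ n/2` of `(1 − α^|γ|)`. -/
theorem stmt15 {A : Type*} [Fintype A] [DecidableEq A] (d n : ℕ) (hd : 1 ≤ d) (hn : 1 ≤ n)
    (α : ENNReal) (hα : α ≤ 1) :
    bernoulliProd A d n α hα
        {ω | ∀ γ : Set ((Fin d → ℤ) → A), IsFiniteOrbit γ → ¬ γ ⊆ sftOfOmega ω} ≤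
      ∏ᶠ γ ∈ {γ : Set ((Fin d → ℤ) → A) | IsFiniteOrbit γ ∧ 2 * γ.ncard ≤ n},
        (1 - α ^ γ.ncard) := by
  classical
  have hμdef : bernoulliProd A d n α hα
      = Measure.pi (fun _ : (Fin d → Fin n) → A => (PMF.bernoulli α.toNNReal (by simpa using ENNReal.toNNReal_mono ENNReal.one_ne_top hα)).toMeasure) := rfl
  have hprob : IsProbabilityMeasure (bernoulliProd A d n α hα) := by
    rw [hμdef]; infer_instance
  set S := {γ : Set ((Fin d → ℤ) → A) | IsFiniteOrbit γ ∧ 2 * γ.ncard ≤ n} with hSdef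
  by_cases hfin : S.Finite
  case neg =>
    by_cases hα0 : α = 0
    · subst hα0
      have h1 : Set.EqOn (fun γ : Set ((Fin d → ℤ) → A) => (1 : ENNReal) - 0 ^ γ.ncard) 1 S := by
        intro γ hγ
        have h2 : 1 ≤ γ.ncard := ncard_pos_of_orbit hγ.1
        simp only [Pi.one_apply]
        rw [zero_pow (by omega), tsub_zero]
      rw [finprod_mem_of_eqOn_one h1]
      exact prob_le_one
    · rw [finprod_mem_def, finprod_of_infinite_mulSupport]
      · exact prob_le_one
      · rw [Set.mulSupport_mulIndicator]
        have : S ∩ Function.mulSupport (fun γ : Set ((Fin d → ℤ) → A) =>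
            (1 : ENNReal) - α ^ γ.ncard) = S := by
          refine Set.inter_eq_self_of_subset_left ?_
          intro γ _
          exact (ENNReal.sub_lt_self ENNReal.one_ne_top one_ne_zero (pow_ne_zero _ hα0)).ne
        rw [this]
        exact fun h => hfin h
  case pos =>
    set Wset : Set ((Fin d → ℤ) → A) → Set ((Fin d → Fin n) → A) :=
      fun γ => {u | ∃ x ∈ γ, ∃ v, patternOf x v = u} with hWdef
    set E : Set ((Fin d → ℤ) → A) → Set (((Fin d → Fin n) → A) → Bool) :=
      fun γ => {ω | ∀ u ∈ Wset γ, ω u = true} with hEdef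
    have hEvent : ∀ (ω : ((Fin d → Fin n) → A) → Bool) γ, γ ⊆ sftOfOmega ω ↔ ω ∈ E γ := by
      intro ω γ
      constructor
      · rintro h u ⟨x, hx, v, rfl⟩
        exact h hx v
      · intro h x hx v
        exact h _ ⟨x, hx, v, rfl⟩
    have hdisj : ∀ γ ∈ hfin.toFinset, ∀ γ' ∈ hfin.toFinset, γ ≠ γ' →
        Disjoint (Wset γ) (Wset γ') := by
      intro γ hγ γ' hγ' hne
      rw [Set.Finite.mem_toFinset] at hγ hγ'
      rw [Set.disjoint_left]
      rintro u ⟨x, hx, v, rfl⟩ ⟨y, hy, w, hw⟩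
      exact hne (pattern_eq_imp hγ.1 hγ'.1 hγ.2 hγ'.2 hx hy hw.symm).2
    have hdep : ∀ γ ∈ hfin.toFinset, DOn (Wset γ) ((E γ)ᶜ) := by
      intro γ _
      refine DOn.compl ?_
      intro ω ω' hagree
      exact forall_congr' fun u => forall_congr' fun hu => by rw [hagree u hu]
    have hWcard : ∀ γ, IsFiniteOrbit γ →
        ((Set.toFinite (Wset γ)).toFinset).card ≤ γ.ncard := by
      intro γ hγ
      rw [← Set.ncard_eq_toFinset_card _ (Set.toFinite _)]
      have himg : Wset γ = (fun x => patternOf (n := n) x (fun _ => 0)) '' γ := by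
        ext u
        constructor
        · rintro ⟨x, hx, v, rfl⟩
          exact ⟨shiftZd v x, mem_orbit_shift hγ hx v, pattern_shift x v⟩
        · rintro ⟨x, hx, rfl⟩
          exact ⟨x, hx, _, rfl⟩
      rw [himg]
      exact Set.ncard_image_le hγ.1
    have hmeasE : ∀ γ, Measure.pi (fun _ : (Fin d → Fin n) → A => (PMF.bernoulli α.toNNReal (by simpa using ENNReal.toNNReal_mono ENNReal.one_ne_top hα)).toMeasure)
        (E γ) = α ^ ((Set.toFinite (Wset γ)).toFinset).card := by
      intro γ
      have h1 : E γ = {ω : ((Fin d → Fin n) → A) → Bool |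
          ∀ u ∈ (Set.toFinite (Wset γ)).toFinset, ω u = true} := by
        ext ω
        simp only [hEdef, Set.mem_setOf_eq, Set.Finite.mem_toFinset]
      rw [h1]
      exact meas_allTrue hα _
    have hmeasEc : ∀ γ, Measure.pi (fun _ : (Fin d → Fin n) → A => (PMF.bernoulli α.toNNReal (by simpa using ENNReal.toNNReal_mono ENNReal.one_ne_top hα)).toMeasure)
        ((E γ)ᶜ) = 1 - α ^ ((Set.toFinite (Wset γ)).toFinset).card := by
      intro γ
      rw [measure_compl (measurableSet_all _) (measure_ne_top _ _), measure_univ, hmeasE]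
    have hsub : {ω | ∀ γ : Set ((Fin d → ℤ) → A), IsFiniteOrbit γ → ¬ γ ⊆ sftOfOmega ω}
        ⊆ ⋂ γ ∈ hfin.toFinset, (E γ)ᶜ := by
      intro ω hω
      simp only [Set.mem_iInter]
      intro γ hγ
      rw [Set.Finite.mem_toFinset] at hγ
      exact fun hE => hω γ hγ.1 ((hEvent ω γ).mpr hE)
    calc bernoulliProd A d n α hα
          {ω | ∀ γ : Set ((Fin d → ℤ) → A), IsFiniteOrbit γ → ¬ γ ⊆ sftOfOmega ω}
        ≤ bernoulliProd A d n α hα (⋂ γ ∈ hfin.toFinset, (E γ)ᶜ) := measure_mono hsub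
      _ = ∏ γ ∈ hfin.toFinset,
            Measure.pi (fun _ : (Fin d → Fin n) → A => (PMF.bernoulli α.toNNReal (by simpa using ENNReal.toNNReal_mono ENNReal.one_ne_top hα)).toMeasure)
              ((E γ)ᶜ) := by
          rw [hμdef]
          exact prod_fact _ _ Wset _ hdep hdisj
      _ ≤ ∏ γ ∈ hfin.toFinset, (1 - α ^ γ.ncard) := by
          refine Finset.prod_le_prod' fun γ hγ => ?_
          rw [Set.Finite.mem_toFinset] at hγ
          rw [hmeasEc]
          exact tsub_le_tsub_left
            (pow_le_pow_of_le_one zero_le hα (hWcard γ hγ.1)) 1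
      _ = ∏ᶠ γ ∈ S, (1 - α ^ γ.ncard) :=
          (finprod_mem_eq_finite_toFinset_prod _ hfin).symm
end
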